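/- arXiv:2107.09776 — 3 statements merged into one kernel-verified Lean document; each statement's English description precedes it below -/
import Mathlib

section
/- In the elliptic case (a > 0, Δ < 0) with 0 < c < a, the branch maps f_s(x) = (-b x + s√(Δ x² + 4a))/(2a), s = ±1, map the interval B = [-2√(c/|Δ|), 2√(c/|Δ|)] into itself. -/
theorem elliptic_invariant_interval (a b c : ℝ) (ha : a > 0)
    (hΔ : b ^ 2 - 4 * a * c < 0) (hc : 0 < c) (hca : c < a) :
    let Δ : ℝ := b ^ 2 - 4 * a * c
    let xstar : ℝ := 2 * Real.sqrt (c / |Δ|)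
    ∀ s : ℝ, s = 1 ∨ s = -1 → ∀ x ∈ Set.Icc (-xstar) xstar,
      (-b * x + s * Real.sqrt (Δ * x ^ 2 + 4 * a)) / (2 * a) ∈ Set.Icc (-xstar) xstar := by
  intro Δ xstar s hs x hx
  have hden : 0 < 4 * a * c - b ^ 2 := by linarith
  have habs : |Δ| = 4 * a * c - b ^ 2 := by
    rw [abs_of_neg hΔ]; ring
  set t := Real.sqrt (c / |Δ|) with ht_def
  have ht0 : 0 ≤ t := Real.sqrt_nonneg _
  have ht2 : t ^ 2 = c / (4 * a * c - b ^ 2) := by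
    rw [ht_def, Real.sq_sqrt, habs]
    rw [habs]
    positivity
  have ht2' : t ^ 2 * (4 * a * c - b ^ 2) = c := by
    rw [ht2]; field_simp
    exact div_self (ne_of_gt (by linarith))
  have hxl : -(2 * t) ≤ x := hx.1
  have hxu : x ≤ 2 * t := hx.2
  have hb' : b < 2 * a := by nlinarith
  have hb'' : -(2 * a) < b := by nlinarith
  have hpos1 : 0 ≤ 4 * a * t + b * x := by
    nlinarith [mul_nonneg (by linarith : (0:ℝ) ≤ 2 * a + b) (by linarith : (0:ℝ) ≤ 2 * t + x),
      mul_nonneg (by linarith : (0:ℝ) ≤ 2 * a - b) (by linarith : (0:ℝ) ≤ 2 * t - x)]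
  have hpos2 : 0 ≤ 4 * a * t - b * x := by
    nlinarith [mul_nonneg (by linarith : (0:ℝ) ≤ 2 * a + b) (by linarith : (0:ℝ) ≤ 2 * t - x),
      mul_nonneg (by linarith : (0:ℝ) ≤ 2 * a - b) (by linarith : (0:ℝ) ≤ 2 * t + x)]
  have hsq0 : 0 ≤ Real.sqrt (Δ * x ^ 2 + 4 * a) := Real.sqrt_nonneg _
  have key1 : Real.sqrt (Δ * x ^ 2 + 4 * a) ≤ 4 * a * t + b * x := by
    rw [show 4 * a * t + b * x = Real.sqrt ((4 * a * t + b * x) ^ 2) from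
      (Real.sqrt_sq hpos1).symm]
    apply Real.sqrt_le_sqrt
    have h := sq_nonneg (b * t + c * x)
    show (b ^ 2 - 4 * a * c) * x ^ 2 + 4 * a ≤ _
    nlinarith [mul_pos ha hc, sq_nonneg (b * t + c * x), ht2']
  have key2 : Real.sqrt (Δ * x ^ 2 + 4 * a) ≤ 4 * a * t - b * x := by
    rw [show 4 * a * t - b * x = Real.sqrt ((4 * a * t - b * x) ^ 2) from
      (Real.sqrt_sq hpos2).symm]
    apply Real.sqrt_le_sqrt
    show (b ^ 2 - 4 * a * c) * x ^ 2 + 4 * a ≤ _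
    nlinarith [mul_pos ha hc, sq_nonneg (b * t - c * x), ht2']
  have h2a : (0:ℝ) < 2 * a := by linarith
  have hxs : xstar = 2 * t := rfl
  constructor
  · rw [le_div_iff₀ h2a, hxs]
    rcases hs with rfl | rfl
    · linarith [hsq0, key1, key2, hpos1, hpos2]
    · linarith [hsq0, key1, key2, hpos1, hpos2]
  · rw [div_le_iff₀ h2a, hxs]
    rcases hs with rfl | rfl
    · linarith [hsq0, key1, key2, hpos1, hpos2]
    · linarith [hsq0, key1, key2, hpos1, hpos2]
end

section
/- In the hyperbolic case with a > 0 and Δ > 0, for every x with Δx² + 4a > 0, the derivative of each branch f_s satisfies m_- < f_s'(x) < m_+ where m_± = (-b ± √Δ)/(2a); hence if |m_±| < 1 then |f_s'(x)| < 1 for all such x. -/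
theorem hyperbolic_deriv_bounds (a b c : ℝ) (ha : a > 0)
    (hΔ : b ^ 2 - 4 * a * c > 0) (s : ℝ) (hs : s = 1 ∨ s = -1) :
    let Δ : ℝ := b ^ 2 - 4 * a * c
    let mp : ℝ := (-b + Real.sqrt Δ) / (2 * a)
    let mm : ℝ := (-b - Real.sqrt Δ) / (2 * a)
    ∀ x : ℝ, Δ * x ^ 2 + 4 * a > 0 →
      (mm < deriv (fun y : ℝ => (-b * y + s * Real.sqrt (Δ * y ^ 2 + 4 * a)) / (2 * a)) x ∧
       deriv (fun y : ℝ => (-b * y + s * Real.sqrt (Δ * y ^ 2 + 4 * a)) / (2 * a)) x < mp) ∧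
      (|mp| < 1 → |mm| < 1 →
        |deriv (fun y : ℝ => (-b * y + s * Real.sqrt (Δ * y ^ 2 + 4 * a)) / (2 * a)) x| < 1) := by
  intro Δ mp mm x hx
  have hΔpos : (0:ℝ) < Δ := hΔ
  have hw : 0 < Real.sqrt (Δ * x ^ 2 + 4 * a) := Real.sqrt_pos.mpr hx
  set w : ℝ := Real.sqrt (Δ * x ^ 2 + 4 * a) with hwdef
  have hw2 : w ^ 2 = Δ * x ^ 2 + 4 * a := Real.sq_sqrt hx.le
  set r : ℝ := Real.sqrt Δ with hrdef
  have hr : 0 < r := Real.sqrt_pos.mpr hΔpos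
  have hr2 : r ^ 2 = Δ := Real.sq_sqrt hΔpos.le
  -- derivative computation
  have hinner : HasDerivAt (fun y : ℝ => Δ * y ^ 2 + 4 * a) (Δ * (2 * x)) x := by
    simpa using (((hasDerivAt_pow 2 x).const_mul Δ).add_const (4 * a))
  have hsqrt : HasDerivAt (fun y : ℝ => Real.sqrt (Δ * y ^ 2 + 4 * a))
      (1 / (2 * w) * (Δ * (2 * x))) x :=
    (Real.hasDerivAt_sqrt (ne_of_gt hx)).comp x hinner
  have hf : HasDerivAt (fun y : ℝ => (-b * y + s * Real.sqrt (Δ * y ^ 2 + 4 * a)) / (2 * a))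
      ((-b + s * (1 / (2 * w) * (Δ * (2 * x)))) / (2 * a)) x := by
    have := ((hasDerivAt_id x).const_mul (-b)).add (hsqrt.const_mul s)
    simpa using this.div_const (2 * a)
  have hderiv : deriv (fun y : ℝ => (-b * y + s * Real.sqrt (Δ * y ^ 2 + 4 * a)) / (2 * a)) x
      = (-b + s * (Δ * x / w)) / (2 * a) := by
    rw [hf.deriv]; field_simp
  -- key inequality: |s * (Δ * x / w)| < r
  have hkey : |s * (Δ * x / w)| < r := by
    have hs1 : |s| = 1 := by rcases hs with h | h <;> simp [h]
    rw [abs_mul, hs1, one_mul, abs_div, abs_of_pos hw, div_lt_iff₀ hw]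
    nlinarith [abs_nonneg (Δ * x), sq_abs (Δ * x), mul_pos hr hw, sq_nonneg (|Δ * x| - r * w)]
  have hkey' := abs_lt.mp hkey
  have h2a : (0:ℝ) < 2 * a := by linarith
  constructor
  · rw [hderiv]
    constructor
    · rw [div_lt_div_iff₀ h2a h2a]; nlinarith [hkey'.1]
    · rw [div_lt_div_iff₀ h2a h2a]; nlinarith [hkey'.2]
  · intro hmp hmm
    have h1 := abs_lt.mp hmp
    have h2 := abs_lt.mp hmm
    rw [hderiv]
    rw [abs_lt]
    constructor
    · have : mm < (-b + s * (Δ * x / w)) / (2 * a) := by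
        rw [div_lt_div_iff₀ h2a h2a]; nlinarith [hkey'.1]
      linarith [h2.1]
    · have : (-b + s * (Δ * x / w)) / (2 * a) < mp := by
        rw [div_lt_div_iff₀ h2a h2a]; nlinarith [hkey'.2]
      linarith [h1.2]
end

section
/- Let B ⊂ ℝ be a nonempty closed interval and f_+, f_- : B → B continuous maps each Lipschitz with constant L < 1. Then for every bi-infinite symbol sequence s : ℤ → {-1,+1} there exists a unique sequence ξ : ℤ → B such that ξ_t = f_{s_t}(ξ_{t-1}) for all t ∈ ℤ. -/
theorem ai_states_exist_unique (lo hi : ℝ) (hB : lo ≤ hi)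
    (fp fm : ℝ → ℝ) (L : ℝ) (hL : L < 1)
    (hfp : ∀ x ∈ Set.Icc lo hi, fp x ∈ Set.Icc lo hi)
    (hfm : ∀ x ∈ Set.Icc lo hi, fm x ∈ Set.Icc lo hi)
    (hfpc : ∀ x ∈ Set.Icc lo hi, ∀ y ∈ Set.Icc lo hi, |fp x - fp y| ≤ L * |x - y|)
    (hfmc : ∀ x ∈ Set.Icc lo hi, ∀ y ∈ Set.Icc lo hi, |fm x - fm y| ≤ L * |x - y|)
    (s : ℤ → ℝ) (hs : ∀ t, s t = 1 ∨ s t = -1) :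
    ∃! ξ : ℤ → ℝ, (∀ t, ξ t ∈ Set.Icc lo hi) ∧
      ∀ t, ξ t = (if s t = 1 then fp else fm) (ξ (t - 1)) := by
  classical
  set B := Set.Icc lo hi with hBdef
  set L' := max L 0 with hL'def
  have hL'0 : (0:ℝ) ≤ L' := le_max_right _ _
  have hL'1 : L' < 1 := max_lt hL one_pos
  set F : ℤ → ℝ → ℝ := fun t => if s t = 1 then fp else fm with hF
  have hFmap : ∀ t, ∀ x ∈ B, F t x ∈ B := by
    intro t x hx
    by_cases h : s t = 1
    · simpa [hF, h] using hfp x hx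
    · simpa [hF, h] using hfm x hx
  have hFlip : ∀ t, ∀ x ∈ B, ∀ y ∈ B, |F t x - F t y| ≤ L' * |x - y| := by
    intro t x hx y hy
    have h1 : |F t x - F t y| ≤ L * |x - y| := by
      by_cases h : s t = 1
      · simpa [hF, h] using hfpc x hx y hy
      · simpa [hF, h] using hfmc x hx y hy
    exact h1.trans (mul_le_mul_of_nonneg_right (le_max_left _ _) (abs_nonneg _))
  have hdiam : ∀ x ∈ B, ∀ y ∈ B, |x - y| ≤ hi - lo := by
    intro x hx y hy
    rw [abs_sub_le_iff]
    constructor <;> [skip; skip] <;>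
      · obtain ⟨hx1, hx2⟩ := hx; obtain ⟨hy1, hy2⟩ := hy; linarith
  -- approximating sequence
  let a : ℕ → ℤ → ℝ := fun n => Nat.rec (fun _ => lo) (fun _ ih t => F t (ih (t - 1))) n
  have ha0 : ∀ t, a 0 t = lo := fun _ => rfl
  have haS : ∀ n t, a (n + 1) t = F t (a n (t - 1)) := fun _ _ => rfl
  have haB : ∀ n t, a n t ∈ B := by
    intro n
    induction n with
    | zero => intro t; exact ⟨le_refl _, hB⟩
    | succ n ih => intro t; rw [haS]; exact hFmap t _ (ih _)
  have hd : ∀ n t, |a (n + 1) t - a n t| ≤ L' ^ n * (hi - lo) := by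
    intro n
    induction n with
    | zero =>
      intro t
      simpa using hdiam _ (haB 1 t) _ (haB 0 t)
    | succ n ih =>
      intro t
      rw [haS (n+1), haS n]
      calc |F t (a (n+1) (t-1)) - F t (a n (t-1))| ≤ L' * |a (n+1) (t-1) - a n (t-1)| :=
            hFlip t (a (n+1) (t-1)) (haB (n+1) (t-1)) (a n (t-1)) (haB n (t-1))
        _ ≤ L' * (L' ^ n * (hi - lo)) := mul_le_mul_of_nonneg_left (ih _) hL'0
        _ = L' ^ (n+1) * (hi - lo) := by ring
  have hcauchy : ∀ t, CauchySeq (fun n => a n t) := by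
    intro t
    apply cauchySeq_of_le_geometric L' (hi - lo) hL'1
    intro n
    rw [Real.dist_eq, abs_sub_comm]
    exact (hd n t).trans_eq (mul_comm _ _)
  have hex : ∀ t, ∃ x, Filter.Tendsto (fun n => a n t) Filter.atTop (nhds x) :=
    fun t => cauchySeq_tendsto_of_complete (hcauchy t)
  choose ξ hξ using hex
  have hξB : ∀ t, ξ t ∈ B := fun t =>
    isClosed_Icc.mem_of_tendsto (hξ t) (Filter.Eventually.of_forall fun n => haB n t)
  have hξeq : ∀ t, ξ t = F t (ξ (t - 1)) := by
    intro t
    have h1 : Filter.Tendsto (fun n => a (n + 1) t) Filter.atTop (nhds (ξ t)) :=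
      (hξ t).comp (Filter.tendsto_add_atTop_nat 1)
    have h2 : Filter.Tendsto (fun n => F t (a n (t - 1))) Filter.atTop (nhds (F t (ξ (t - 1)))) := by
      rw [tendsto_iff_dist_tendsto_zero]
      have hg : Filter.Tendsto (fun n => L' * dist (a n (t-1)) (ξ (t-1))) Filter.atTop (nhds 0) := by
        have := (tendsto_iff_dist_tendsto_zero.mp (hξ (t-1))).const_mul L'
        simpa using this
      refine squeeze_zero (fun n => dist_nonneg) (fun n => ?_) hg
      rw [Real.dist_eq, Real.dist_eq]
      exact hFlip t _ (haB n (t-1)) _ (hξB (t-1))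
    have h1' : Filter.Tendsto (fun n => F t (a n (t - 1))) Filter.atTop (nhds (ξ t)) := by
      simpa [haS] using h1
    exact tendsto_nhds_unique h1' h2
  refine ⟨ξ, ⟨hξB, hξeq⟩, ?_⟩
  rintro η ⟨hηB, hηeq⟩
  have key : ∀ n t, |η t - ξ t| ≤ L' ^ n * (hi - lo) := by
    intro n
    induction n with
    | zero => intro t; simpa using hdiam _ (hηB t) _ (hξB t)
    | succ n ih =>
      intro t
      rw [hηeq t, hξeq t]
      calc |F t (η (t-1)) - F t (ξ (t-1))| ≤ L' * |η (t-1) - ξ (t-1)| :=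
            hFlip t _ (hηB _) _ (hξB _)
        _ ≤ L' * (L' ^ n * (hi - lo)) := mul_le_mul_of_nonneg_left (ih _) hL'0
        _ = L' ^ (n+1) * (hi - lo) := by ring
  funext t
  have hlim : Filter.Tendsto (fun n => L' ^ n * (hi - lo)) Filter.atTop (nhds 0) := by
    have := (tendsto_pow_atTop_nhds_zero_of_lt_one hL'0 hL'1).mul_const (hi - lo)
    simpa using this
  have h0 : |η t - ξ t| ≤ 0 := ge_of_tendsto' hlim (fun n => key n t)
  have := abs_nonpos_iff.mp h0
  linarith [sub_eq_zero.mp this]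
end
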